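/- The index n*(θ) = argmin_{n ∈ {1,…,N}} |θ - θ̄_n| maximizes |Γ(θ - θ̄_n)| over n, i.e., the angle-domain entry with largest magnitude of F a(θ) is attained at the angle-domain sample closest to θ, provided θ ∈ [θ̄_1, θ̄_N] and the minimizer is unique. -/

import Mathlib

open Real

private lemma sin_mono_aux {a b : ℝ} (ha : 0 ≤ a) (hab : a ≤ b) (hb : b ≤ 2 - a) :
    Real.sin (π * a / 2) ≤ Real.sin (π * b / 2) := by
  have hpi := Real.pi_pos
  rcases le_or_gt b 1 with hb1 | hb1
  · apply Real.sin_le_sin_of_le_of_le_pi_div_two <;> nlinarith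
  · have heq : Real.sin (π * b / 2) = Real.sin (π * (2 - b) / 2) := by
      have : π * (2 - b) / 2 = π - π * b / 2 := by ring
      rw [this, Real.sin_pi_sub]
    rw [heq]
    apply Real.sin_le_sin_of_le_of_le_pi_div_two <;> nlinarith

private lemma abs_sin_half {x : ℝ} (hx : |x| ≤ 2) :
    |Real.sin (π * x / 2)| = Real.sin (π * |x| / 2) := by
  have hpi := Real.pi_pos
  have h0 : 0 ≤ Real.sin (π * |x| / 2) := by
    apply Real.sin_nonneg_of_nonneg_of_le_pi
    · positivity
    · nlinarith [abs_nonneg x]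
  rcases abs_cases x with ⟨h1, _⟩ | ⟨h1, _⟩
  · rw [h1] at h0 ⊢; exact abs_of_nonneg h0
  · rw [h1] at h0 ⊢
    have : π * (-x) / 2 = -(π * x / 2) := by ring
    rw [this, Real.sin_neg] at h0 ⊢
    rw [← abs_neg]; exact abs_of_nonneg h0

private lemma sin_half_ne_zero {x : ℝ} (h0 : x ≠ 0) (hx : |x| < 2) :
    Real.sin (π * x / 2) ≠ 0 := by
  intro h
  rw [Real.sin_eq_zero_iff] at h
  obtain ⟨j, hj⟩ := h
  have hpi := Real.pi_pos
  have hxj : x = 2 * j := by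
    have := hj
    field_simp at this
    nlinarith [this]
  have hj0 : j ≠ 0 := by
    intro hj0; rw [hj0] at hxj; simp at hxj; exact h0 hxj
  have : (1 : ℝ) ≤ |(j : ℝ)| := by
    rw [← Int.cast_abs]
    exact_mod_cast Int.one_le_abs hj0
  rw [hxj, abs_mul] at hx
  rw [abs_two] at hx
  nlinarith

/-- If `θ ∈ [θ̄ 1, θ̄ N]` and the angle-domain sample closest to `θ` is
unique, then that closest sample maximizes `|Γ(θ - θ̄ n)|` over `n`, i.e., the
angle-domain entry of `F a(θ)` with largest magnitude is attained at the nearest sample.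
`G` is the continuous extension of `Γ(x) = sin(Nπx/2)/sin(πx/2)`. -/
theorem nearest_sample_maximizes_gamma (N : ℕ) (hN : 2 ≤ N)
    (G : ℝ → ℝ) (hGcont : Continuous G)
    (hG : ∀ x, Real.sin (π * x / 2) ≠ 0 →
      G x = Real.sin (N * π * x / 2) / Real.sin (π * x / 2))
    (θbar : Fin N → ℝ) (hθ : ∀ n, θbar n = (2 * ((n : ℕ) : ℝ) + 1 - N) / N)
    (θ : ℝ) (hθlo : θbar ⟨0, by omega⟩ ≤ θ) (hθhi : θ ≤ θbar ⟨N - 1, by omega⟩)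
    (nstar : Fin N)
    (hunique : ∀ n : Fin N, n ≠ nstar → |θ - θbar nstar| < |θ - θbar n|) :
    ∀ n : Fin N, |G (θ - θbar n)| ≤ |G (θ - θbar nstar)| := by
  have hNR : (0 : ℝ) < N := by positivity
  have hNR2 : (2 : ℝ) ≤ N := by exact_mod_cast hN
  have hpi := Real.pi_pos
  -- bounds on θ
  have hlo : (1 - (N : ℝ)) / N ≤ θ := by
    have := hθlo; rw [hθ] at this; simpa using this
  have hhi : θ ≤ ((N : ℝ) - 1) / N := by
    have := hθhi; rw [hθ] at this
    have hcast : (((N - 1 : ℕ) : ℝ)) = (N : ℝ) - 1 := by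
      have : (1 : ℕ) ≤ N := by omega
      push_cast [this]; ring
    rw [hcast] at this
    calc θ ≤ (2 * ((N:ℝ) - 1) + 1 - N) / N := this
    _ = ((N : ℝ) - 1) / N := by ring_nf
  -- distance from θ to nearest sample is at most 1/N
  have hdsmall : |θ - θbar nstar| ≤ 1 / N := by
    set t : ℝ := (θ * N + N - 1) / 2 with ht
    have ht0 : 0 ≤ t := by
      rw [ht]
      have : 1 - (N:ℝ) ≤ θ * N := by
        have := mul_le_mul_of_nonneg_right hlo (le_of_lt hNR)
        calc (1 : ℝ) - N = (1 - (N:ℝ)) / N * N := by field_simp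
        _ ≤ θ * N := this
      linarith
    have ht1 : t ≤ (N : ℝ) - 1 := by
      rw [ht]
      have : θ * N ≤ (N:ℝ) - 1 := by
        have := mul_le_mul_of_nonneg_right hhi (le_of_lt hNR)
        calc θ * N ≤ ((N:ℝ) - 1) / N * N := this
        _ = (N:ℝ) - 1 := by field_simp
      linarith
    set m : ℤ := round t with hm
    have hm0 : 0 ≤ m := by
      have h1 := sub_half_lt_round t
      have h2 : (-1 : ℝ) < (m : ℝ) := by rw [hm]; linarith
      have h3 : (-1 : ℤ) < m := by exact_mod_cast h2
      omega
    have hm1 : m ≤ (N : ℤ) - 1 := by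
      have h1 := round_le_add_half t
      have : (m : ℝ) < (N : ℝ) := by rw [hm]; linarith
      have : m < (N : ℤ) := by exact_mod_cast this
      omega
    have hmN : m.toNat < N := by omega
    set m' : Fin N := ⟨m.toNat, hmN⟩ with hm'
    have hdist : |θ - θbar m'| ≤ 1 / N := by
      have hcast : ((m'.val : ℕ) : ℝ) = (m : ℝ) := by
        simp [hm']
        exact_mod_cast Int.toNat_of_nonneg hm0
      have hθeq : θ - θbar m' = 2 * (t - m) / N := by
        rw [hθ, hcast, ht]; field_simp; ring
      rw [hθeq]
      have habs := abs_sub_round t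
      rw [abs_div, abs_of_pos hNR, abs_mul, abs_two]
      rw [div_le_div_iff₀ hNR hNR]
      nlinarith [abs_nonneg (t - (m:ℝ))]
    by_cases hcase : m' = nstar
    · rw [← hcase]; exact hdist
    · exact le_of_lt (lt_of_lt_of_le (hunique m' hcase) hdist)
  -- main argument
  intro n
  by_cases hn : n = nstar
  · rw [hn]
  set d : ℝ := θ - θbar nstar with hd
  set y : ℝ := θ - θbar n with hy
  -- bound on |y|
  have hnval : ((n.val : ℕ) : ℝ) ≤ (N : ℝ) - 1 := by
    have : (n.val : ℕ) ≤ N - 1 := by omega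
    have h2 : ((n.val : ℕ) : ℝ) ≤ ((N - 1 : ℕ) : ℝ) := by exact_mod_cast this
    have h3 : ((N - 1 : ℕ) : ℝ) = (N : ℝ) - 1 := by
      have : (1 : ℕ) ≤ N := by omega
      push_cast [this]; ring
    linarith
  have hnval0 : (0 : ℝ) ≤ ((n.val : ℕ) : ℝ) := by positivity
  have hloN : 1 - (N : ℝ) ≤ θ * N := by
    have := mul_le_mul_of_nonneg_right hlo (le_of_lt hNR)
    calc (1 : ℝ) - N = (1 - (N:ℝ)) / N * N := by field_simp
    _ ≤ θ * N := this
  have hhiN : θ * N ≤ (N : ℝ) - 1 := by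
    have := mul_le_mul_of_nonneg_right hhi (le_of_lt hNR)
    calc θ * N ≤ ((N:ℝ) - 1) / N * N := this
    _ = (N:ℝ) - 1 := by field_simp
  have hybound : |y| ≤ 2 - 2 / N := by
    rw [hy, hθ, abs_le]
    constructor
    · rw [show θ - (2 * ((n.val : ℕ) : ℝ) + 1 - N) / N
          = (θ * N - (2 * ((n.val : ℕ) : ℝ) + 1 - N)) / N from by field_simp,
        show -(2 - 2 / (N:ℝ)) = (2 - 2 * N) / N from (by field_simp; ring),
        div_le_div_iff₀ hNR hNR]
      nlinarith
    · rw [show θ - (2 * ((n.val : ℕ) : ℝ) + 1 - N) / N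
          = (θ * N - (2 * ((n.val : ℕ) : ℝ) + 1 - N)) / N from by field_simp,
        show (2 : ℝ) - 2 / N = (2 * N - 2) / N from by field_simp,
        div_le_div_iff₀ hNR hNR]
      nlinarith
  have hdy : |d| < |y| := hunique n hn
  have hy0 : y ≠ 0 := by
    intro h; rw [h] at hdy; simp at hdy; exact absurd hdy (not_lt.mpr (abs_nonneg d))
  have hy2 : |y| < 2 := by
    have : (0:ℝ) < 2 / N := by positivity
    linarith
  have hsy : Real.sin (π * y / 2) ≠ 0 := sin_half_ne_zero hy0 hy2
  -- numerator relation: y = d + 2k/N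
  set k : ℤ := (nstar.val : ℤ) - (n.val : ℤ) with hk
  have hyd : y = d + 2 * k / N := by
    rw [hy, hd, hθ, hθ, hk]
    push_cast
    field_simp
    ring
  have hnum : |Real.sin (N * π * y / 2)| = |Real.sin (N * π * d / 2)| := by
    have harg : N * π * y / 2 = N * π * d / 2 + k * π := by
      rw [hyd]; field_simp
    rw [harg, Real.sin_add_int_mul_pi, abs_mul]
    rcases Int.even_or_odd k with hpar | hpar
    · rw [hpar.neg_one_zpow]; simp
    · rw [hpar.neg_one_zpow]; simp
  -- denominator comparison
  have hdenom : |Real.sin (π * d / 2)| ≤ |Real.sin (π * y / 2)| := by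
    have hd2 : |d| ≤ 2 := by
      have : 1 / (N:ℝ) ≤ 1 := by
        rw [div_le_one hNR]; linarith
      linarith [hdsmall]
    rw [abs_sin_half hd2, abs_sin_half (le_of_lt hy2)]
    apply sin_mono_aux (abs_nonneg d) (le_of_lt hdy)
    have h1N : (1:ℝ) / N ≤ 2 / N := by gcongr <;> norm_num
    linarith [hdsmall]
  by_cases hsd : Real.sin (π * d / 2) = 0
  · -- then d = 0 and the numerator vanishes
    have hd0 : d = 0 := by
      by_contra hd0
      refine (sin_half_ne_zero hd0 ?_) hsd
      have : 1 / (N:ℝ) < 2 := by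
        rw [div_lt_iff₀ hNR]; nlinarith
      linarith [hdsmall]
    have : Real.sin (N * π * y / 2) = 0 := by
      have : |Real.sin (N * π * y / 2)| = 0 := by
        rw [hnum, hd0]; simp
      exact abs_eq_zero.mp this
    rw [hG y hsy, this, zero_div, abs_zero]
    exact abs_nonneg _
  · rw [hG y hsy, hG d hsd, abs_div, abs_div, hnum]
    apply div_le_div_of_nonneg_left (abs_nonneg _) (abs_pos.mpr hsd) hdenom
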